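/- Let t_V > 0, t_D ≥ 0, let q_1, …, q_m ∈ (0,1], and let 1 ≤ l ≤ m−1 with q_l > q_{l+1}. Let q̃ be the sequence obtained from q by exchanging the entries at positions l and l+1. Then T(q̃_1, …, q̃_m) < T(q_1, …, q_m); that is, a sequence that is not sorted in increasing order of rejection probability cannot minimize the expected episode duration. -/

import Mathlib

/-- Expected episode duration: `expDur tV tD [q₁, …, qₘ]` is the expected annotation time of
the strategy `VᵐD` that verifies boxes with rejection probabilities `q₁, …, qₘ` in order
(each verification taking time `tV`) and draws manually (taking time `tD`) if all are
rejected: `expDur tV tD [] = tD` and `expDur tV tD (q :: qs) = tV + q * expDur tV tD qs`. -/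
noncomputable def expDur (tV tD : ℝ) : List ℝ → ℝ
  | [] => tD
  | q :: qs => tV + q * expDur tV tD qs

/-- If `t_V > 0`, all rejection probabilities lie in `(0,1]`, and the adjacent entries at
positions `l` and `l+1` satisfy `q_l > q_{l+1}`, then swapping them strictly decreases the
expected episode duration: an unsorted sequence cannot be optimal. -/
theorem expDur_swap_adjacent_lt (tV tD : ℝ) (htV : 0 < tV) (htD : 0 ≤ tD)
    (A B : List ℝ) (x y : ℝ)
    (hA : ∀ q ∈ A, 0 < q ∧ q ≤ 1) (hB : ∀ q ∈ B, 0 < q ∧ q ≤ 1)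
    (hx : 0 < x ∧ x ≤ 1) (hy : 0 < y ∧ y ≤ 1) (hxy : y < x) :
    expDur tV tD (A ++ y :: x :: B) < expDur tV tD (A ++ x :: y :: B) := by
  induction A with
  | nil =>
    simp only [List.nil_append, expDur]
    nlinarith [hx.1, hy.1]
  | cons a A ih =>
    have ha := hA a List.mem_cons_self
    have ih' := ih (fun q hq => hA q (List.mem_cons_of_mem a hq))
    simp only [List.cons_append, expDur, List.append_eq]
    have := mul_lt_mul_of_pos_left ih' ha.1
    linarith
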